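/- Let φ be a C² function on an open subset U of ℝⁿ with Δφ = 0, let c ∈ ℝⁿ be a constant vector with vanishing last component, let e be the unit vector in the last coordinate direction, and let g > 0. Then the vector field A = (-(|c|²/g)(e·∇φ) + c·x + φ)∇φ + (|c|²/g)(½|∇φ|² - c·∇φ)e + ((|c|²/g)(e·∇φ) - φ)c satisfies ∇·A = |∇φ|² on U. -/

import Mathlib

open MeasureTheory Real Filter InnerProductSpace

noncomputable section

abbrev Euc (n : ℕ) := EuclideanSpace ℝ (Fin n)

def lapl {n : ℕ} (f : Euc n → ℝ) (x : Euc n) : ℝ :=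
  ∑ i, fderiv ℝ (fun y => fderiv ℝ f y (EuclideanSpace.single i 1)) x (EuclideanSpace.single i 1)

def diverg {n : ℕ} (A : Euc n → Euc n) (x : Euc n) : ℝ :=
  ∑ i, fderiv ℝ A x (EuclideanSpace.single i 1) i

def kelvinInv {n : ℕ} (x : Euc n) : Euc n := (‖x‖ ^ 2)⁻¹ • x

def lastIdx (n : ℕ) (hn : 0 < n) : Fin n := ⟨n - 1, Nat.sub_lt hn Nat.one_pos⟩

def eLast (n : ℕ) (hn : 0 < n) : Euc n := EuclideanSpace.single (lastIdx n hn) 1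

def horiz {n : ℕ} (x : Euc n) : Euc (n - 1) :=
  WithLp.toLp 2 fun (i : Fin (n - 1)) => x ⟨i.val, lt_of_lt_of_le i.isLt (Nat.sub_le n 1)⟩

def vert {n : ℕ} (hn : 0 < n) (x : Euc n) : ℝ := x (lastIdx n hn)

def mkPt {n : ℕ} (x' : Euc (n - 1)) (t : ℝ) : Euc n :=
  WithLp.toLp 2 fun (j : Fin n) => if h : (j : ℕ) < n - 1 then x' ⟨j, h⟩ else t

/-- CLM sending a functional to the corresponding Euclidean vector. -/
def iotaE (n : ℕ) : (Euc n →L[ℝ] ℝ) →L[ℝ] Euc n :=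
  ((EuclideanSpace.equiv (Fin n) ℝ).symm.toContinuousLinearMap).comp
    (ContinuousLinearMap.pi fun i => ContinuousLinearMap.apply ℝ ℝ (EuclideanSpace.single i 1))

theorem iotaE_apply {n : ℕ} (L : Euc n →L[ℝ] ℝ) (j : Fin n) :
    iotaE n L j = L (EuclideanSpace.single j 1) := rfl

theorem sum_single_smul {n : ℕ} (u : Euc n) :
    ∑ i, u i • (EuclideanSpace.single i 1 : Euc n) = u := by
  ext j
  rw [WithLp.ofLp_sum, Finset.sum_apply j Finset.univ _]
  simp [EuclideanSpace.single_apply]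

theorem Lsum {n : ℕ} (u : Euc n) (L : Euc n →L[ℝ] ℝ) :
    ∑ i, L (EuclideanSpace.single i 1) * u i = L u := by
  conv_rhs => rw [← sum_single_smul u]
  rw [map_sum]
  simp [mul_comm]

theorem iotaE_eq {n : ℕ} (L : Euc n →L[ℝ] ℝ) :
    iotaE n L = (toDual ℝ (Euc n)).symm L := by
  ext j
  have h := toDual_symm_apply (𝕜 := ℝ) (y := L) (x := (EuclideanSpace.single j 1 : Euc n))
  rw [EuclideanSpace.inner_single_right] at h
  simpa [iotaE_apply] using h.symm

theorem grad_eq {n : ℕ} (φ : Euc n → ℝ) :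
    gradient φ = fun y => iotaE n (fderiv ℝ φ y) := by
  funext y
  rw [iotaE_eq]
  rfl

theorem inner_iotaE {n : ℕ} (L : Euc n →L[ℝ] ℝ) (u : Euc n) :
    (inner ℝ (iotaE n L) u : ℝ) = L u := by
  rw [iotaE_eq]
  exact toDual_symm_apply

theorem inner_iotaE' {n : ℕ} (L : Euc n →L[ℝ] ℝ) (u : Euc n) :
    (inner ℝ u (iotaE n L) : ℝ) = L u := by
  rw [real_inner_comm]; exact inner_iotaE L u

/-- Divergence identity `∇·A = |∇φ|²` for the vector field `A` built from a harmonic `φ`. -/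
theorem div_A_eq_grad_sq {n : ℕ} (hn : 0 < n) (U : Set (Euc n)) (hU : IsOpen U)
    (φ : Euc n → ℝ) (hφ : ContDiffOn ℝ 2 φ U)
    (hharm : ∀ x ∈ U, lapl φ x = 0)
    (c : Euc n) (hc : vert hn c = 0)
    (g : ℝ) (hg : 0 < g) :
    ∀ x ∈ U,
      diverg (fun y =>
        (-(‖c‖ ^ 2 / g) * (inner ℝ (eLast n hn) (gradient φ y) : ℝ)
            + (inner ℝ c y : ℝ) + φ y) • gradient φ y
        + ((‖c‖ ^ 2 / g) * ((1 / 2) * ‖gradient φ y‖ ^ 2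
            - (inner ℝ c (gradient φ y) : ℝ))) • eLast n hn
        + ((‖c‖ ^ 2 / g) * (inner ℝ (eLast n hn) (gradient φ y) : ℝ) - φ y) • c) x
      = ‖gradient φ x‖ ^ 2 := by
  intro x hx
  have hxU : U ∈ nhds x := hU.mem_nhds hx
  have hφx : ContDiffAt ℝ 2 φ x := hφ.contDiffAt hxU
  have hF : ContDiffAt ℝ 1 (fun y => fderiv ℝ φ y) x := hφx.fderiv_right (by norm_num)
  set D := fderiv ℝ (fderiv ℝ φ) x with hDdef
  have hD : HasFDerivAt (fun y => fderiv ℝ φ y) D x :=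
    (hF.differentiableAt one_ne_zero).hasFDerivAt
  have hev : ∀ᶠ y in nhds x, HasFDerivAt φ (fderiv ℝ φ y) y := by
    filter_upwards [hxU] with y hy
    exact ((hφ.contDiffAt (hU.mem_nhds hy)).differentiableAt (by norm_num)).hasFDerivAt
  have hsymm : ∀ v w, D v w = D w v := fun v w =>
    second_derivative_symmetric_of_eventually hev hD v w
  have hφd : HasFDerivAt φ (fderiv ℝ φ x) x := (hφx.differentiableAt (by norm_num)).hasFDerivAt
  set Dg : Euc n →L[ℝ] Euc n := (iotaE n).comp D with hDgdef
  have hG : HasFDerivAt (gradient φ) Dg x := by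
    rw [grad_eq φ]
    exact ((iotaE n).hasFDerivAt).comp x hD
  set e := eLast n hn with he
  set Gx := gradient φ x with hGx
  set K := ‖c‖ ^ 2 / g with hK
  -- scalar derivative pieces
  have h1 : HasFDerivAt (fun y => (inner ℝ e (gradient φ y) : ℝ))
      ((fderivInnerCLM ℝ (e, Gx)).comp (((0 : Euc n →L[ℝ] Euc n)).prod Dg)) x :=
    HasFDerivAt.inner ℝ (hasFDerivAt_const e x) hG
  have hic : HasFDerivAt (fun y : Euc n => (inner ℝ c y : ℝ))
      ((fderivInnerCLM ℝ (c, x)).comp (((0 : Euc n →L[ℝ] Euc n)).prod (ContinuousLinearMap.id ℝ _))) x :=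
    HasFDerivAt.inner ℝ (hasFDerivAt_const c x) (hasFDerivAt_id x)
  have hicg : HasFDerivAt (fun y => (inner ℝ c (gradient φ y) : ℝ))
      ((fderivInnerCLM ℝ (c, Gx)).comp (((0 : Euc n →L[ℝ] Euc n)).prod Dg)) x :=
    HasFDerivAt.inner ℝ (hasFDerivAt_const c x) hG
  have hsq : HasFDerivAt (fun y => ‖gradient φ y‖ ^ 2)
      ((fderivInnerCLM ℝ (Gx, Gx)).comp (Dg.prod Dg)) x := by
    refine HasFDerivAt.congr_of_eventuallyEq (HasFDerivAt.inner ℝ hG hG) ?_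
    exact Eventually.of_forall fun y => (real_inner_self_eq_norm_sq _).symm
  have hf := ((h1.const_mul (-K)).add hic).add hφd
  have hh := ((hsq.const_mul ((1:ℝ)/2)).sub hicg).const_mul K
  have hk := (h1.const_mul K).sub hφd
  have hA := (((hf.smul hG).add (hh.smul (hasFDerivAt_const e x))).add (hk.smul (hasFDerivAt_const c x)))
  have hA' : HasFDerivAt (fun y =>
        (-K * (inner ℝ e (gradient φ y) : ℝ)
            + (inner ℝ c y : ℝ) + φ y) • gradient φ y
        + (K * ((1 / 2) * ‖gradient φ y‖ ^ 2
            - (inner ℝ c (gradient φ y) : ℝ))) • e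
        + (K * (inner ℝ e (gradient φ y) : ℝ) - φ y) • c) _ x := hA
  simp only [diverg]
  rw [hA'.fderiv]
  have hDgapp : ∀ (v : Euc n) (j : Fin n), Dg v j = D v (EuclideanSpace.single j 1) :=
    fun v j => iotaE_apply (D v) j
  have hDginner : ∀ (u v : Euc n), (inner ℝ u (Dg v) : ℝ) = D v u := fun u v => inner_iotaE' (D v) u
  simp only [ContinuousLinearMap.add_apply, ContinuousLinearMap.coe_comp', Function.comp_apply,
    ContinuousLinearMap.prod_apply, ContinuousLinearMap.zero_apply, ContinuousLinearMap.smulRight_apply,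
    ContinuousLinearMap.coe_smul', Pi.smul_apply, ContinuousLinearMap.coe_sub', Pi.sub_apply,
    Pi.add_apply, fderivInnerCLM_apply, inner_zero_left, ContinuousLinearMap.id_apply, smul_eq_mul,
    PiLp.add_apply, PiLp.smul_apply, PiLp.zero_apply, smul_zero, hDgapp, hDginner, zero_add, add_zero,
    real_inner_comm (Dg _)]
  have hDginner2 : ∀ (u v : Euc n), (inner ℝ (Dg v) u : ℝ) = D v u := fun u v => inner_iotaE (D v) u
  simp only [hDginner2]
  -- normalize basic entries
  have hfx : ∀ j : Fin n, (fderiv ℝ φ x) (EuclideanSpace.single j 1) = Gx j := by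
    intro j; rw [hGx, grad_eq]; rfl
  have hcj : ∀ j : Fin n, (inner ℝ c (EuclideanSpace.single j 1 : Euc n) : ℝ) = c j := by
    intro j; rw [EuclideanSpace.inner_single_right]; simp
  have hGxj : ∀ j : Fin n, gradient φ x j = Gx j := fun j => rfl
  have hse : ∀ u : Euc n, D u e = D e u := fun u => hsymm u e
  have hsG : ∀ u : Euc n, D u Gx = D Gx u := fun u => hsymm u Gx
  have hsc : ∀ u : Euc n, D u c = D c u := fun u => hsymm u c
  simp only [hfx, hcj, hGxj, hse, hsG, hsc]
  have happly : ∀ v : Euc n, fderiv ℝ (fun y => fderiv ℝ φ y v) x = (ContinuousLinearMap.apply ℝ ℝ v).comp D := by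
    intro v
    exact HasFDerivAt.fderiv (((ContinuousLinearMap.apply ℝ ℝ v).hasFDerivAt).comp x hD)
  have htrace : ∑ i, D (EuclideanSpace.single i 1) (EuclideanSpace.single i 1) = 0 := by
    have h0 := hharm x hx
    unfold lapl at h0
    simp only [happly, ContinuousLinearMap.coe_comp', Function.comp_apply,
      ContinuousLinearMap.apply_apply] at h0
    exact h0
  have hsplit : ∑ i : Fin n,
      ((-K * (inner ℝ e (gradient φ x) : ℝ) + (inner ℝ c x : ℝ) + φ x)
          * (D (EuclideanSpace.single i 1)) (EuclideanSpace.single i 1) +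
        (-K * (D e) (EuclideanSpace.single i 1) + c i + Gx i) * Gx i +
        K * (1 / 2 * ((D Gx) (EuclideanSpace.single i 1) + (D Gx) (EuclideanSpace.single i 1)) -
            (D c) (EuclideanSpace.single i 1)) * e i +
        (K * (D e) (EuclideanSpace.single i 1) - Gx i) * c i)
      = (-K * (inner ℝ e (gradient φ x) : ℝ) + (inner ℝ c x : ℝ) + φ x)
          * (∑ i, D (EuclideanSpace.single i 1) (EuclideanSpace.single i 1))
        + (∑ i, Gx i * Gx i)
        + (-K) * (∑ i, (D e) (EuclideanSpace.single i 1) * Gx i)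
        + (∑ i, (K * ((D Gx) (EuclideanSpace.single i 1) - (D c) (EuclideanSpace.single i 1))) * e i)
        + K * (∑ i, (D e) (EuclideanSpace.single i 1) * c i) := by
    rw [Finset.mul_sum, Finset.mul_sum, Finset.mul_sum, ← Finset.sum_add_distrib,
      ← Finset.sum_add_distrib, ← Finset.sum_add_distrib, ← Finset.sum_add_distrib]
    exact Finset.sum_congr rfl fun i _ => by ring
  rw [hsplit, htrace, Lsum Gx (D e), Lsum c (D e)]
  have hesum : ∑ i, (K * ((D Gx) (EuclideanSpace.single i 1) - (D c) (EuclideanSpace.single i 1))) * e i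
      = K * ((D Gx) e - (D c) e) := by
    have hee : (EuclideanSpace.single (lastIdx n hn) 1 : Euc n) = e := rfl
    rw [he]
    unfold eLast
    simp [EuclideanSpace.single_apply, mul_ite, Finset.sum_ite_eq']
  rw [hesum, hse Gx, hse c]
  have hnorm : ∑ i, Gx i * Gx i = ‖Gx‖ ^ 2 := by
    rw [← real_inner_self_eq_norm_sq]
    simp only [PiLp.inner_apply, RCLike.inner_apply, conj_trivial]
  rw [hnorm]
  ring
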